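/- For all λ > 0 and r ≥ 0, ∫_r^∞ (2r/h²) · (8/3)π²λ^{5/2} h⁴ e^{−λπh²} dh = (4λπ r/3) · ( erfc(r√(λπ)) + 2r√λ e^{−λπ r²} ), where erfc(z) := (2/√π) ∫_z^∞ e^{−u²} du. That is, if H has density (8/3)π²λ^{5/2}h⁴e^{−λπh²} on [0,∞) and, given H = h, R has conditional density 2r/h² on [0, h], then the marginal density of R is f(r) = (4λπr/3)(erfc(r√(λπ)) + 2r√λ e^{−λπr²}). -/

import Mathlib

open MeasureTheory Set

/-- The complementary error function `erfc(z) = (2/√π) ∫_z^∞ e^{−u²} du`. -/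
noncomputable def erfc (z : ℝ) : ℝ := 2 / Real.sqrt Real.pi * ∫ u in Set.Ioi z, Real.exp (-u ^ 2)

lemma aux_exp_int (a r : ℝ) (ha : 0 < a) :
    ∫ h in Ioi r, Real.exp (-(a * h ^ 2)) =
      Real.sqrt Real.pi / (2 * Real.sqrt a) * erfc (Real.sqrt a * r) := by
  have hsa : 0 < Real.sqrt a := Real.sqrt_pos.2 ha
  have h1 : ∀ h : ℝ, Real.exp (-(a * h ^ 2)) = Real.exp (-(Real.sqrt a * h) ^ 2) := by
    intro h
    congr 1
    rw [mul_pow, Real.sq_sqrt ha.le]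
  simp_rw [h1]
  rw [integral_comp_mul_left_Ioi (fun x => Real.exp (-x ^ 2)) r hsa]
  rw [erfc]
  have hsπ : 0 < Real.sqrt Real.pi := Real.sqrt_pos.2 Real.pi_pos
  field_simp
  rw [smul_eq_mul, ← mul_assoc, mul_one_div_cancel hsa.ne', one_mul]

lemma aux_sq_exp_int (a r : ℝ) (ha : 0 < a) (hr : 0 ≤ r) :
    ∫ h in Ioi r, h ^ 2 * Real.exp (-(a * h ^ 2)) =
      r / (2 * a) * Real.exp (-(a * r ^ 2)) +
        1 / (2 * a) * ∫ h in Ioi r, Real.exp (-(a * h ^ 2)) := by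
  have hE : Integrable fun x : ℝ => Real.exp (-(a * x ^ 2)) := by
    simpa [neg_mul] using integrable_exp_neg_mul_sq ha
  set f : ℝ → ℝ := fun h => -(1 / (2 * a)) * (h * Real.exp (-(a * h ^ 2))) with hf
  have hderiv : ∀ x ∈ Ioi r, HasDerivAt f
      (x ^ 2 * Real.exp (-(a * x ^ 2)) - 1 / (2 * a) * Real.exp (-(a * x ^ 2))) x := by
    intro x _
    have h1 : HasDerivAt (fun h : ℝ => -(a * h ^ 2)) (-(a * (2 * x))) x := by
      exact (((hasDerivAt_pow 2 x).const_mul a).neg).congr_deriv (by norm_num)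
    have h2 : HasDerivAt (fun h : ℝ => h * Real.exp (-(a * h ^ 2)))
        (1 * Real.exp (-(a * x ^ 2)) + x * (Real.exp (-(a * x ^ 2)) * (-(a * (2 * x))))) x :=
      (hasDerivAt_id x).mul h1.exp
    have := h2.const_mul (-(1 / (2 * a)))
    refine this.congr_deriv ?_
    field_simp
    ring
  have hcont : ContinuousWithinAt f (Ici r) r := by
    apply Continuous.continuousWithinAt
    fun_prop
  have hI2 : IntegrableOn (fun x : ℝ => x ^ 2 * Real.exp (-(a * x ^ 2))) (Ioi r) := by
    have h0 : IntegrableOn (fun x : ℝ => x ^ ((2:ℕ):ℝ) * Real.exp (-a * x ^ 2)) (Ioi 0) := by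
      apply integrableOn_rpow_mul_exp_neg_mul_sq ha
      norm_num
    have h0' := h0.mono_set (Ioi_subset_Ioi hr)
    apply h0'.congr_fun _ measurableSet_Ioi
    intro x hx
    simp only [Real.rpow_natCast, neg_mul]
  have hint : IntegrableOn (fun x => x ^ 2 * Real.exp (-(a * x ^ 2)) -
      1 / (2 * a) * Real.exp (-(a * x ^ 2))) (Ioi r) :=
    hI2.sub ((hE.const_mul (1 / (2 * a))).restrict)
  have htend : Filter.Tendsto f Filter.atTop (nhds 0) := by
    have h1 := rpow_mul_exp_neg_mul_sq_isLittleO_exp_neg ha 1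
    have hlin : Filter.Tendsto (fun x : ℝ => -(1/2) * x) Filter.atTop Filter.atBot :=
      Filter.Tendsto.const_mul_atTop_of_neg (by norm_num) Filter.tendsto_id
    have hg : Filter.Tendsto (fun x : ℝ => Real.exp (-(1/2) * x)) Filter.atTop (nhds 0) :=
      Real.tendsto_exp_atBot.comp hlin
    have h2 := h1.tendsto_zero_of_tendsto hg
    have h3 := h2.const_mul (-(1 / (2 * a)))
    rw [mul_zero] at h3
    apply h3.congr
    intro x
    simp only [hf, Real.rpow_one, neg_mul]
  have key := integral_Ioi_of_hasDerivAt_of_tendsto hcont hderiv hint htend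
  have hsplit : ∫ x in Ioi r, (x ^ 2 * Real.exp (-(a * x ^ 2)) -
      1 / (2 * a) * Real.exp (-(a * x ^ 2))) =
      (∫ x in Ioi r, x ^ 2 * Real.exp (-(a * x ^ 2))) -
        (1 / (2 * a)) * ∫ x in Ioi r, Real.exp (-(a * x ^ 2)) := by
    rw [integral_sub hI2 ((hE.const_mul (1 / (2 * a))).restrict), integral_const_mul]
  rw [hsplit] at key
  have hfr : f r = -(1 / (2 * a)) * (r * Real.exp (-(a * r ^ 2))) := rfl
  rw [hfr] at key
  linear_combination key

/-- Marginal density of the serving distance at a typical min-interference epoch: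
if `H` has density `(8/3)π²λ^{5/2}h⁴e^{−λπh²}` on `[0,∞)` and, given `H = h`, `R` has
conditional density `2r/h²` on `[0,h]`, then
`∫_r^∞ (2r/h²) · (8/3)π²λ^{5/2} h⁴ e^{−λπh²} dh
  = (4λπr/3)(erfc(r√(λπ)) + 2r√λ e^{−λπr²})`. -/
theorem stmt_13 (lam r : ℝ) (hlam : 0 < lam) (hr : 0 ≤ r) :
    (∫ h in Ioi r,
        2 * r / h ^ 2 *
          (8/3 * Real.pi ^ 2 * lam ^ ((5:ℝ)/2) * h ^ 4 * Real.exp (-(lam * Real.pi * h ^ 2)))) =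
      4 * lam * Real.pi * r / 3 *
        (erfc (r * Real.sqrt (lam * Real.pi)) +
          2 * r * Real.sqrt lam * Real.exp (-(lam * Real.pi * r ^ 2))) := by
  rcases eq_or_lt_of_le hr with rfl | hr'
  · simp
  set a : ℝ := lam * Real.pi with ha_def
  have hπ : 0 < Real.pi := Real.pi_pos
  have ha : 0 < a := by positivity
  have hcongr : ∫ h in Ioi r,
        2 * r / h ^ 2 *
          (8/3 * Real.pi ^ 2 * lam ^ ((5:ℝ)/2) * h ^ 4 * Real.exp (-(a * h ^ 2))) =
      ∫ h in Ioi r, (16/3 * Real.pi ^ 2 * lam ^ ((5:ℝ)/2) * r) *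
          (h ^ 2 * Real.exp (-(a * h ^ 2))) := by
    apply setIntegral_congr_fun measurableSet_Ioi
    intro x hx
    have hx0 : (0:ℝ) < x := lt_of_le_of_lt hr hx
    field_simp
    ring
  rw [hcongr, integral_const_mul, aux_sq_exp_int a r ha hr, aux_exp_int a r ha]
  have hlam52 : lam ^ ((5:ℝ)/2) = lam ^ 2 * Real.sqrt lam := by
    rw [show ((5:ℝ)/2) = ((2:ℕ):ℝ) + 1/2 by norm_num, Real.rpow_add hlam,
      Real.rpow_natCast, ← Real.sqrt_eq_rpow]
  have hsqa : Real.sqrt a = Real.sqrt lam * Real.sqrt Real.pi := Real.sqrt_mul hlam.le _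
  have hsl : 0 < Real.sqrt lam := Real.sqrt_pos.2 hlam
  have hsπ : 0 < Real.sqrt Real.pi := Real.sqrt_pos.2 hπ
  have hsl2 : Real.sqrt lam * Real.sqrt lam = lam := Real.mul_self_sqrt hlam.le
  have hsπ2 : Real.sqrt Real.pi * Real.sqrt Real.pi = Real.pi := Real.mul_self_sqrt hπ.le
  rw [hlam52, hsqa,
    show Real.sqrt lam * Real.sqrt Real.pi * r = r * (Real.sqrt lam * Real.sqrt Real.pi) by ring]
  set E := Real.exp (-(a * r ^ 2))
  set C := erfc (r * (Real.sqrt lam * Real.sqrt Real.pi))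
  rw [ha_def]
  field_simp
  nlinarith [hsl2, hsπ2, sq_nonneg r, mul_pos hsl hsπ]
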